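/- arXiv:1906.09780 — 2 statements merged into one kernel-verified Lean document; each statement's English description precedes it below -/
import Mathlib

section
/- For every prime power q, B_q(13, 5, 4; 4) ≥ (q^3 + 1)(q^9 + q^7 + q^5 + q^3). -/
set_option linter.unusedSectionVars false
set_option maxHeartbeats 1000000


/-- The subspace distance between two subspaces:
`d_s(U,W) = dim(U+W) - dim(U∩W)`. -/
noncomputable def subspaceDist {F V : Type*} [Field F] [AddCommGroup V] [Module F V]
    (U W : Submodule F V) : ℕ :=
  Module.finrank F ↥(U ⊔ W) - Module.finrank F ↥(U ⊓ W)

/-- `C` is a constant dimension code of `k`-spaces in `F^v` with minimum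
subspace distance at least `d`. -/
def IsCDCode (F : Type*) [Field F] (v k d : ℕ)
    (C : Finset (Submodule F (Fin v → F))) : Prop :=
  (∀ U ∈ C, Module.finrank F ↥U = k) ∧
  (∀ U ∈ C, ∀ U' ∈ C, U ≠ U' → d ≤ subspaceDist U U')

/-- `A_q(v,d;k)`: the maximum cardinality of a constant dimension code of
`k`-spaces in `F^v` with minimum subspace distance at least `d`. -/
noncomputable def Aq (F : Type*) [Field F] (v d k : ℕ) : ℕ :=
  sSup {n | ∃ C : Finset (Submodule F (Fin v → F)), C.card = n ∧ IsCDCode F v k d C}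

/-- `B_q(v1,v2,d;k)`: the maximum cardinality of a constant dimension code of
`k`-spaces in `F^{v1}` with minimum subspace distance at least `d` such that some
`v2`-space `W` intersects every codeword in dimension at least `d/2`. -/
noncomputable def Bq (F : Type*) [Field F] (v1 v2 d k : ℕ) : ℕ :=
  sSup {n | ∃ (C : Finset (Submodule F (Fin v1 → F))) (W : Submodule F (Fin v1 → F)),
    C.card = n ∧ IsCDCode F v1 k d C ∧ Module.finrank F ↥W = v2 ∧
    (∀ U ∈ C, d / 2 ≤ Module.finrank F ↥(U ⊓ W))}

/-- The Gaussian binomial coefficient `[a choose b]_q`. -/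
noncomputable def gaussBinom (q : ℚ) (a b : ℕ) : ℚ :=
  ∏ i ∈ Finset.range b, (q ^ (a - b + i + 1) - 1) / (q ^ (i + 1) - 1)

/-- The row space of the matrix `(I_k | A)`, viewed as a subspace of `F^v`. -/
noncomputable def rowSpanAug (F : Type*) [Field F] (k v : ℕ) (h : k ≤ v)
    (A : Matrix (Fin k) (Fin (v - k)) F) : Submodule F (Fin v → F) :=
  Submodule.span F (Set.range fun i : Fin k =>
    Fin.append ((1 : Matrix (Fin k) (Fin k) F) i) (A i) ∘ Fin.cast (Nat.add_sub_cancel' h).symm)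


open Polynomial

section Construction

variable {F K2 K3 : Type} [Field F] [Field K2] [Field K3]
  [Algebra F K2] [Algebra F K3]

open Classical in
/-- the 2-dim subspaces `L_c` of the 5-space `W`, as maps from `Fin 2 → F`. -/
noncomputable def ell (j : (Fin 2 → F) →ₗ[F] K3) (c : Option K3) :
    (Fin 2 → F) →ₗ[F] K3 × (Fin 2 → F) :=
  match c with
  | none => LinearMap.prod 0 LinearMap.id
  | some c =>
      if c = 0 then LinearMap.prod j 0
      else LinearMap.prod (c⁻¹ • j) LinearMap.id

open Classical in
/-- the embedding of values used for index `c`. -/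
noncomputable def vv (p3 : K3 →ₗ[F] (Fin 2 → F)) (c : Option K3) :
    K3 →ₗ[F] K3 × (Fin 2 → F) :=
  if c = some 0 then LinearMap.prod LinearMap.id p3
  else LinearMap.prod LinearMap.id 0

variable (j : (Fin 2 → F) →ₗ[F] K3) (p3 : K3 →ₗ[F] (Fin 2 → F))
variable (iota : K2 →ₗ[F] K3)

@[simp] lemma ell_none_apply (h : Fin 2 → F) : ell j none h = (0, h) := rfl

lemma ell_some_zero_apply (h : Fin 2 → F) : ell j (some 0) h = (j h, 0) := by
  simp [ell]

lemma ell_some_ne_apply {c : K3} (hc : c ≠ 0) (h : Fin 2 → F) :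
    ell j (some c) h = (c⁻¹ * j h, h) := by
  simp [ell, hc, smul_eq_mul]

lemma vv_some_zero_apply (z : K3) : vv p3 (some 0) z = (z, p3 z) := by
  simp [vv]

lemma vv_ne_zero_apply {c : Option K3} (hc : c ≠ some 0) (z : K3) :
    vv p3 c z = (z, 0) := by
  simp [vv, hc]

variable (hpj : ∀ h, p3 (j h) = h)

include hpj in
lemma j_inj : Function.Injective j := by
  intro a b hab
  have := congrArg p3 hab
  rwa [hpj, hpj] at this

include hpj in
lemma ell_eq_zero {c : Option K3} {h : Fin 2 → F} (he : ell j c h = 0) : h = 0 := by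
  match c with
  | none => simpa using congrArg Prod.snd he
  | some c =>
    by_cases hc : c = 0
    · subst hc
      rw [ell_some_zero_apply] at he
      have := congrArg Prod.fst he
      simp only at this
      exact j_inj j p3 hpj (by simpa using this)
    · rw [ell_some_ne_apply j hc] at he
      simpa using congrArg Prod.snd he

include hpj in
lemma ell_disj {c c' : Option K3} (hcc : c ≠ c') {h h' : Fin 2 → F}
    (he : ell j c h = ell j c' h') : h = 0 ∧ h' = 0 := by
  have key : ∀ (c c' : Option K3), c ≠ c' → ∀ (h h' : Fin 2 → F),
      ell j c h = ell j c' h' → h = 0 := by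
    intro c c' hcc h h' he
    match c, c' with
    | none, none => exact absurd rfl hcc
    | none, some c' =>
      by_cases hc' : c' = 0
      · subst hc'
        rw [ell_some_zero_apply] at he
        simpa using congrArg Prod.snd he
      · rw [ell_some_ne_apply j hc'] at he
        have h1 := congrArg Prod.fst he
        have h2 := congrArg Prod.snd he
        simp only at h1 h2
        subst h2
        have : j h = 0 := by
          have : (0 : K3) = c'⁻¹ * j h := h1
          field_simp at this
          simpa using this.symm
        have : h = 0 := j_inj j p3 hpj (by simpa using this)
        exact this
    | some c, none =>
      by_cases hc : c = 0
      · subst hc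
        rw [ell_some_zero_apply] at he
        have h2 := congrArg Prod.snd he
        simp only at h2
        have h1 := congrArg Prod.fst he
        simp only [← h2] at h1
        exact j_inj j p3 hpj (by simpa using h1)
      · rw [ell_some_ne_apply j hc] at he
        have h2 := congrArg Prod.snd he
        have h1 := congrArg Prod.fst he
        simp only at h1 h2
        subst h2
        have : j h = 0 := by
          have : c⁻¹ * j h = 0 := h1
          rcases mul_eq_zero.1 this with h | h
          · exact absurd (inv_eq_zero.1 h) hc
          · exact h
        exact j_inj j p3 hpj (by simpa using this)
    | some c, some c' =>
      have hne : c ≠ c' := fun h => hcc (by rw [h])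
      by_cases hc : c = 0
      · subst hc
        have hc' : c' ≠ 0 := fun h => hne h.symm
        rw [ell_some_zero_apply, ell_some_ne_apply j hc'] at he
        have h2 := congrArg Prod.snd he
        have h1 := congrArg Prod.fst he
        simp only at h1 h2
        rw [← h2] at h1
        simp only [map_zero, mul_zero] at h1
        exact j_inj j p3 hpj (by simpa using h1)
      · by_cases hc' : c' = 0
        · subst hc'
          rw [ell_some_ne_apply j hc, ell_some_zero_apply] at he
          have h2 := congrArg Prod.snd he
          simp only at h2
          exact h2
        · rw [ell_some_ne_apply j hc, ell_some_ne_apply j hc'] at he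
          have h2 := congrArg Prod.snd he
          have h1 := congrArg Prod.fst he
          simp only at h1 h2
          subst h2
          have hj0 : j h = 0 := by
            by_contra hne0
            have : c⁻¹ = c'⁻¹ := mul_right_cancel₀ hne0 h1
            exact hne (inv_injective this)
          exact j_inj j p3 hpj (by simpa using hj0)
  refine ⟨key c c' hcc h h' he, key c' c (Ne.symm hcc) h' h he.symm⟩

include hpj in
lemma vv_ne_ell {c : Option K3} {z : K3} (hz : z ≠ 0) (h : Fin 2 → F) :
    vv p3 c z ≠ ell j c h := by
  intro he
  match c with
  | none =>
    rw [vv_ne_zero_apply p3 (by simp)] at he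
    exact hz (congrArg Prod.fst he)
  | some c =>
    by_cases hc : c = 0
    · subst hc
      rw [vv_some_zero_apply, ell_some_zero_apply] at he
      have h1 := congrArg Prod.fst he
      have h2 := congrArg Prod.snd he
      simp only at h1 h2
      rw [h1, hpj] at h2
      rw [h2, map_zero] at h1
      exact hz h1
    · rw [vv_ne_zero_apply p3 (by simpa using hc)] at he
      by_cases hcz : c = 0
      · exact hc hcz
      · rw [ell_some_ne_apply j hcz] at he
        have h2 := congrArg Prod.snd he
        simp only at h2
        rw [← h2] at he
        have h1 := congrArg Prod.fst he
        simp only [map_zero, mul_zero] at h1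
        exact hz h1


/-- The parametrization of a codeword. -/
noncomputable def theta (c : Option K3) (v : Fin 4 → K2) (a : K3) :
    ((Fin 2 → F) × K2) →ₗ[F] ((Fin 4 → K2) × (K3 × (Fin 2 → F))) :=
  LinearMap.prod
    (((LinearMap.toSpanSingleton K2 (Fin 4 → K2) v).restrictScalars F) ∘ₗ
      LinearMap.snd F (Fin 2 → F) K2)
    ((ell j c ∘ₗ LinearMap.fst F (Fin 2 → F) K2) +
      ((vv p3 c ∘ₗ LinearMap.mulLeft F a) ∘ₗ iota ∘ₗ LinearMap.snd F (Fin 2 → F) K2))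

lemma theta_apply (c : Option K3) (v : Fin 4 → K2) (a : K3) (h : Fin 2 → F) (t : K2) :
    theta j p3 iota c v a (h, t) = (t • v, ell j c h + vv p3 c (a * iota t)) := rfl

lemma theta_h0 (c : Option K3) (v : Fin 4 → K2) (a : K3) (h : Fin 2 → F) :
    theta j p3 iota c v a (h, 0) = (0, ell j c h) := by
  rw [theta_apply]
  simp

/-- A codeword. -/
noncomputable def Ucode (c : Option K3) (v : Fin 4 → K2) (a : K3) :
    Submodule F ((Fin 4 → K2) × (K3 × (Fin 2 → F))) :=
  LinearMap.range (theta j p3 iota c v a)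

omit [Algebra F K2] [Algebra F K3] in
/-- The distinguished 5-space. -/
noncomputable def Wspace : Submodule F ((Fin 4 → K2) × (K3 × (Fin 2 → F))) :=
  LinearMap.range (LinearMap.inr F (Fin 4 → K2) (K3 × (Fin 2 → F)))

include hpj in
lemma theta_inj {c : Option K3} {v : Fin 4 → K2} (hv : v ≠ 0) (a : K3) :
    Function.Injective (theta j p3 iota c v a) := by
  rw [injective_iff_map_eq_zero]
  rintro ⟨h, t⟩ h0
  rw [theta_apply] at h0
  have h1 : t • v = 0 := congrArg Prod.fst h0
  have ht : t = 0 := by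
    rcases smul_eq_zero.1 h1 with h | h
    · exact h
    · exact absurd h hv
  subst ht
  have h2 : ell j c h + vv p3 c (a * iota 0) = 0 := congrArg Prod.snd h0
  rw [map_zero, mul_zero, map_zero, add_zero] at h2
  have := ell_eq_zero j p3 hpj h2
  simp [this]

variable [FiniteDimensional F K2] [FiniteDimensional F K3]

include hpj in
lemma finrank_Ucode {c : Option K3} {v : Fin 4 → K2} (hv : v ≠ 0) (a : K3)
    (hK2 : Module.finrank F K2 = 2) :
    Module.finrank F ↥(Ucode j p3 iota c v a) = 4 := by
  rw [Ucode, LinearMap.finrank_range_of_inj (theta_inj j p3 iota hpj hv a)]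
  rw [Module.finrank_prod, Module.finrank_fin_fun, hK2]

lemma finrank_Wspace (hK3 : Module.finrank F K3 = 3) :
    Module.finrank F ↥(Wspace (F := F) (K2 := K2) (K3 := K3)) = 5 := by
  rw [Wspace, LinearMap.finrank_range_of_inj LinearMap.inr_injective]
  rw [Module.finrank_prod, Module.finrank_fin_fun, hK3]

include hpj in
lemma two_le_finrank_inter_W (c : Option K3) (v : Fin 4 → K2) (a : K3) :
    2 ≤ Module.finrank F ↥(Ucode j p3 iota c v a ⊓ Wspace) := by
  have hle : LinearMap.range ((LinearMap.inr F (Fin 4 → K2) (K3 × (Fin 2 → F))) ∘ₗ ell j c)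
      ≤ Ucode j p3 iota c v a ⊓ Wspace := by
    refine le_inf ?_ (LinearMap.range_comp_le_range _ _)
    rintro x ⟨h, rfl⟩
    exact ⟨(h, 0), (theta_h0 j p3 iota c v a h).trans rfl⟩
  have hinj : Function.Injective
      ((LinearMap.inr F (Fin 4 → K2) (K3 × (Fin 2 → F))) ∘ₗ ell j c) := by
    refine LinearMap.inr_injective.comp ?_
    rw [injective_iff_map_eq_zero]
    exact fun h h0 => ell_eq_zero j p3 hpj h0
  calc (2 : ℕ) = Module.finrank F ↥(LinearMap.range
        ((LinearMap.inr F (Fin 4 → K2) (K3 × (Fin 2 → F))) ∘ₗ ell j c)) := by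
        rw [LinearMap.finrank_range_of_inj hinj, Module.finrank_fin_fun]
    _ ≤ _ := Submodule.finrank_mono hle


open Classical in
/-- Extracts the `h`-parameter from elements of the form `(0, ell j c h)`. -/
noncomputable def rho (c : Option K3) :
    ((Fin 4 → K2) × (K3 × (Fin 2 → F))) →ₗ[F] (Fin 2 → F) :=
  if c = some 0 then
    p3 ∘ₗ (LinearMap.fst F K3 (Fin 2 → F)) ∘ₗ (LinearMap.snd F (Fin 4 → K2) (K3 × (Fin 2 → F)))
  else (LinearMap.snd F K3 (Fin 2 → F)) ∘ₗ (LinearMap.snd F (Fin 4 → K2) (K3 × (Fin 2 → F)))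

include hpj in
lemma rho_ell (c : Option K3) (x1 : Fin 4 → K2) (h : Fin 2 → F) :
    rho p3 c (x1, ell j c h) = h := by
  match c with
  | none => simp [rho, ell_none_apply]
  | some c =>
    by_cases hc : c = 0
    · subst hc
      rw [ell_some_zero_apply]
      simp [rho, hpj]
    · rw [ell_some_ne_apply j hc]
      simp [rho, hc]

/-- Extracts the `t`-parameter. -/
noncomputable def tau (v : Fin 4 → K2) (i₀ : Fin 4) :
    ((Fin 4 → K2) × (K3 × (Fin 2 → F))) →ₗ[F] K2 :=
  (LinearMap.mulLeft F (v i₀)⁻¹) ∘ₗ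
    ((LinearMap.proj i₀ : (Fin 4 → K2) →ₗ[K2] K2).restrictScalars F) ∘ₗ
    (LinearMap.fst F (Fin 4 → K2) (K3 × (Fin 2 → F)))

lemma tau_theta {v : Fin 4 → K2} {i₀ : Fin 4} (hvi : v i₀ ≠ 0) (c : Option K3) (a : K3)
    (h : Fin 2 → F) (t : K2) :
    tau v i₀ (theta j p3 iota c v a (h, t)) = t := by
  rw [theta_apply]
  simp only [tau, LinearMap.comp_apply, LinearMap.fst_apply, LinearMap.restrictScalars_apply,
    LinearMap.proj_apply, LinearMap.mulLeft_apply, Pi.smul_apply, smul_eq_mul]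
  rw [mul_comm t, ← mul_assoc, inv_mul_cancel₀ hvi, one_mul]

lemma finrank_inter_aux {G : Type} [AddCommGroup G] [Module F G] [FiniteDimensional F G]
    (hG : Module.finrank F G = 2) {S : Submodule F ((Fin 4 → K2) × (K3 × (Fin 2 → F)))}
    (ψ : ((Fin 4 → K2) × (K3 × (Fin 2 → F))) →ₗ[F] G)
    (hker : ∀ x ∈ S, ψ x = 0 → x = 0) : Module.finrank F ↥S ≤ 2 := by
  have hinj : Function.Injective (ψ ∘ₗ S.subtype) := by
    rw [injective_iff_map_eq_zero]
    rintro ⟨x, hx⟩ h0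
    exact Subtype.ext (hker x hx h0)
  simpa [hG] using LinearMap.finrank_le_finrank_of_injective hinj

include hpj in
lemma interA {c c' : Option K3} {v v' : Fin 4 → K2} {a a' : K3}
    (hsm : ∀ t t' : K2, t • v = t' • v' → t = 0 ∧ t' = 0) :
    Module.finrank F ↥(Ucode j p3 iota c v a ⊓ Ucode j p3 iota c' v' a') ≤ 2 := by
  refine finrank_inter_aux (Module.finrank_fin_fun F) (rho p3 c) ?_
  rintro x ⟨⟨⟨h, t⟩, rfl⟩, ⟨⟨h', t'⟩, heq⟩⟩ hψ
  have h1 : t' • v' = t • v := congrArg Prod.fst heq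
  obtain ⟨ht, ht'⟩ := hsm t t' h1.symm
  subst ht
  rw [theta_h0] at hψ ⊢
  rw [rho_ell j p3 hpj] at hψ
  rw [hψ, map_zero]
  exact Prod.ext rfl rfl

include hpj in
lemma interB1 {c : Option K3} {v : Fin 4 → K2} {a a' : K3}
    (hiota : ∀ t, iota t = 0 → t = 0) (hv : v ≠ 0) (ha : a ≠ a') :
    Module.finrank F ↥(Ucode j p3 iota c v a ⊓ Ucode j p3 iota c v a') ≤ 2 := by
  refine finrank_inter_aux (Module.finrank_fin_fun F) (rho p3 c) ?_
  rintro x ⟨⟨⟨h, t⟩, rfl⟩, ⟨⟨h', t'⟩, heq⟩⟩ hψ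
  have h1 : t' • v = t • v := congrArg Prod.fst heq
  have htt : t' = t := by
    have : (t' - t) • v = 0 := by rw [sub_smul, h1, sub_self]
    rcases smul_eq_zero.1 this with hh | hh
    · exact sub_eq_zero.1 hh
    · exact absurd hh hv
  subst htt
  have ht0 : t' = 0 := by
    by_contra ht
    have h2 : ell j c h' + vv p3 c (a' * iota t') = ell j c h + vv p3 c (a * iota t') := by
      have := congrArg Prod.snd heq
      simpa [theta_apply] using this
    have h3 : vv p3 c ((a' - a) * iota t') = ell j c (h - h') := by
      have := sub_eq_sub_iff_add_eq_add.2 (by rw [h2, add_comm] : _ = _)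
      calc vv p3 c ((a' - a) * iota t') = vv p3 c (a' * iota t') - vv p3 c (a * iota t') := by
            rw [← map_sub, sub_mul]
        _ = ell j c (h - h') := by
            rw [map_sub]
            have h4 := congrArg Prod.snd heq
            simp only [theta_apply] at h4
            have h5 : ell j c h' + vv p3 c (a' * iota t') = ell j c h + vv p3 c (a * iota t') := h4
            have : vv p3 c (a' * iota t') - vv p3 c (a * iota t')
                = ell j c h - ell j c h' := by
              have := h5
              abel_nf
              abel_nf at this
              linear_combination (norm := abel) this
            rw [this, ← map_sub]
    have hz : (a' - a) * iota t' ≠ 0 :=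
      mul_ne_zero (sub_ne_zero.2 (Ne.symm ha)) (fun hh => ht (hiota t' hh))
    exact vv_ne_ell j p3 hpj hz (h - h') (by rw [h3, map_sub])
  subst ht0
  rw [theta_h0] at hψ ⊢
  rw [rho_ell j p3 hpj] at hψ
  rw [hψ, map_zero]
  exact Prod.ext rfl rfl

include hpj in
lemma interB2 {c c' : Option K3} {v : Fin 4 → K2} {a a' : K3}
    (hK2 : Module.finrank F K2 = 2) (hv : v ≠ 0) (hcc : c ≠ c') :
    Module.finrank F ↥(Ucode j p3 iota c v a ⊓ Ucode j p3 iota c' v a') ≤ 2 := by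
  obtain ⟨i₀, hvi⟩ := Function.ne_iff.1 hv
  have hvi : v i₀ ≠ 0 := hvi
  refine finrank_inter_aux hK2 (tau v i₀) ?_
  rintro x ⟨⟨⟨h, t⟩, rfl⟩, ⟨⟨h', t'⟩, heq⟩⟩ hψ
  rw [tau_theta j p3 iota hvi] at hψ
  subst hψ
  have ht' : t' = 0 := by
    have := congrArg (tau v i₀) heq
    rwa [tau_theta j p3 iota hvi, tau_theta j p3 iota hvi] at this
  subst ht'
  rw [theta_h0] at heq ⊢
  rw [theta_h0] at heq
  have hee : ell j c' h' = ell j c h := congrArg Prod.snd heq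
  obtain ⟨-, h0⟩ := ell_disj j p3 hpj (Ne.symm hcc) hee
  rw [h0, map_zero]
  exact Prod.ext rfl rfl


include hpj in
lemma inter_le_two (hiota : ∀ t, iota t = 0 → t = 0) (hK2 : Module.finrank F K2 = 2)
    {c c' : Option K3} {m m' : Projectivization K2 (Fin 4 → K2)} {a a' : K3}
    (hne : (c, m, a) ≠ (c', m', a')) :
    Module.finrank F ↥(Ucode j p3 iota c m.rep a ⊓ Ucode j p3 iota c' m'.rep a') ≤ 2 := by
  by_cases hm : m = m'
  · subst hm
    by_cases hc : c = c'
    · subst hc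
      have ha : a ≠ a' := fun h => hne (by rw [h])
      exact interB1 j p3 iota hpj hiota m.rep_nonzero ha
    · exact interB2 j p3 iota hpj hK2 m.rep_nonzero hc
  · refine interA j p3 iota hpj ?_
    intro t t' hsm
    have ht : t = 0 := by
      by_contra ht
      have ht' : t' ≠ 0 := by
        intro h0
        rw [h0, zero_smul] at hsm
        rcases smul_eq_zero.1 hsm with h | h
        · exact ht h
        · exact m.rep_nonzero h
      refine hm ?_
      rw [← m.mk_rep, ← m'.mk_rep, Projectivization.mk_eq_mk_iff]
      refine ⟨Units.mk0 (t⁻¹ * t') (mul_ne_zero (inv_ne_zero ht) ht'), ?_⟩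
      rw [Units.smul_def]
      show (t⁻¹ * t') • m'.rep = m.rep
      rw [mul_smul, ← hsm, smul_smul, inv_mul_cancel₀ ht, one_smul]
    subst ht
    rw [zero_smul] at hsm
    rcases smul_eq_zero.1 hsm.symm with h | h
    · exact ⟨rfl, h⟩
    · exact absurd h m'.rep_nonzero

variable [Fintype F] [Fintype K2]

lemma card_projectivization (hc2 : Fintype.card K2 = Fintype.card F ^ 2)
    [Fintype (Projectivization K2 (Fin 4 → K2))] :
    Fintype.card (Projectivization K2 (Fin 4 → K2)) =
      Fintype.card F ^ 6 + Fintype.card F ^ 4 + Fintype.card F ^ 2 + 1 := by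
  classical
  set q := Fintype.card F with hq
  set k := Fintype.card K2 with hk
  have hk2 : 2 ≤ k := Fintype.one_lt_card
  -- the equivalence
  have e : (K2ˣ × Projectivization K2 (Fin 4 → K2)) ≃ {v : Fin 4 → K2 // v ≠ 0} := by
    refine Equiv.ofBijective
      (fun um => ⟨(um.1 : K2) • um.2.rep,
        smul_ne_zero (Units.ne_zero um.1) um.2.rep_nonzero⟩) ⟨?_, ?_⟩
    · rintro ⟨u, m⟩ ⟨u', m'⟩ huv
      have huv' : (u : K2) • m.rep = (u' : K2) • m'.rep := congrArg Subtype.val huv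
      have hmm : m = m' := by
        rw [← m.mk_rep, ← m'.mk_rep, Projectivization.mk_eq_mk_iff]
        exact ⟨u⁻¹ * u', by
          rw [Units.smul_def]
          show ((u⁻¹ * u' : K2ˣ) : K2) • m'.rep = m.rep
          rw [Units.val_mul, mul_smul, ← huv', smul_smul]
          norm_num⟩
      subst hmm
      have : (u : K2) = (u' : K2) := smul_left_injective K2 m.rep_nonzero huv'
      simp [Prod.ext_iff, Units.ext_iff, this]
    · rintro ⟨v, hv⟩
      obtain ⟨u, hu⟩ := (Projectivization.mk_eq_mk_iff K2 _ _
        (Projectivization.rep_nonzero _) hv).1 (Projectivization.mk_rep (Projectivization.mk K2 v hv))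
      refine ⟨(u⁻¹, Projectivization.mk K2 v hv), Subtype.ext ?_⟩
      show ((u⁻¹ : K2ˣ) : K2) • (Projectivization.mk K2 v hv).rep = v
      rw [← hu, Units.smul_def, smul_smul]
      norm_num
  have hcard1 : Fintype.card {v : Fin 4 → K2 // v ≠ 0} = k ^ 4 - 1 := by
    rw [Fintype.card_subtype_compl, Fintype.card_subtype_eq (0 : Fin 4 → K2)]
    congr 1
    rw [Fintype.card_fun]
    simp
    rfl
  have hcard2 : (k - 1) * Fintype.card (Projectivization K2 (Fin 4 → K2)) = k ^ 4 - 1 := by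
    rw [← hcard1, ← Fintype.card_congr e, Fintype.card_prod, Fintype.card_units]
  set N := Fintype.card (Projectivization K2 (Fin 4 → K2))
  have key : N = k ^ 3 + k ^ 2 + k + 1 := by
    have h2 : ((k : ℤ) - 1) * N = (k : ℤ) ^ 4 - 1 := by
      have hB : 1 ≤ k ^ 4 := Nat.one_le_pow _ _ (by omega)
      zify [show 1 ≤ k from by omega, hB] at hcard2
      exact hcard2
    have h3 : ((k : ℤ) - 1) * N = ((k : ℤ) - 1) * (k ^ 3 + k ^ 2 + k + 1) := by
      rw [h2]; ring
    have h4 : (N : ℤ) = (k : ℤ) ^ 3 + k ^ 2 + k + 1 :=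
      mul_left_cancel₀ (by omega : ((k : ℤ) - 1) ≠ 0) h3
    exact_mod_cast h4
  rw [key, hc2]
  ring


end Construction

open Polynomial


theorem my_exists_ext (F : Type) [Field F] [Fintype F] (d : ℕ) (hd : d ≠ 0) :
    ∃ (K : Type) (_ : Field K) (_ : Algebra F K) (_ : Fintype K),
      Fintype.card K = Fintype.card F ^ d := by
  classical
  obtain ⟨p, hchar⟩ := CharP.exists F
  haveI : CharP F p := hchar
  haveI hp : Fact p.Prime := ⟨(CharP.char_is_prime F p)⟩
  obtain ⟨n, hpn, hcard⟩ := FiniteField.card F p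
  set q := Fintype.card F with hq
  have hq2 : 2 ≤ q := Fintype.one_lt_card
  set g : F[X] := X ^ q ^ d - X with hg
  haveI : Finite g.SplittingField := Module.finite_of_finite F
  haveI : Fintype g.SplittingField := Fintype.ofFinite _
  haveI : CharP g.SplittingField p :=
    charP_of_injective_algebraMap (algebraMap F g.SplittingField).injective p
  have hpd : p ∣ q ^ d := dvd_pow (hcard ▸ dvd_pow_self p n.ne_zero) hd
  have hsep : g.Separable := galois_poly_separable p (q ^ d) hpd
  have hdne : (q ^ d : ℕ) ≠ 0 := by positivity
  have aux : g ≠ 0 := FiniteField.X_pow_card_pow_sub_X_ne_zero _ hd hq2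
  have key : Fintype.card (g.rootSet g.SplittingField) = g.natDegree :=
    card_rootSet_eq_natDegree hsep (SplittingField.splits g)
  have nd : g.natDegree = q ^ d :=
    FiniteField.X_pow_card_pow_sub_X_natDegree_eq _ hd hq2
  suffices huniv : g.rootSet g.SplittingField = Set.univ by
    refine ⟨g.SplittingField, inferInstance, inferInstance, inferInstance, ?_⟩
    have hc : Fintype.card g.SplittingField
        = Fintype.card (g.rootSet g.SplittingField) :=
      (Fintype.card_congr ((Equiv.setCongr huniv).trans (Equiv.Set.univ _))).symm
    rw [hc, key, nd]
  rw [Set.eq_univ_iff_forall]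
  suffices h : ∀ (x) (_ : x ∈ (⊤ : Subalgebra F g.SplittingField)), x ∈ g.rootSet g.SplittingField by simpa using fun x => h x trivial
  rw [← SplittingField.adjoin_rootSet]
  simp_rw [Algebra.mem_adjoin_iff]
  intro x hx
  have hqd : q ^ d = p ^ (n * d) := by rw [hcard, ← pow_mul]
  have hpow : ∀ z : g.SplittingField, z ^ q ^ d = z ^ p ^ ((n : ℕ) * d) :=
    fun z => congrArg (fun e => z ^ e) hqd
  refine Subring.closure_induction ?_ ?_ ?_ ?_ ?_ ?_ hx <;> simp_rw [mem_rootSet_of_ne aux]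
  · rintro x (⟨r, rfl⟩ | hx)
    · simp only [g, map_sub, map_pow, aeval_X]
      rw [← map_pow, FiniteField.pow_card_pow, sub_self]
    · rwa [mem_rootSet_of_ne aux] at hx
  · rw [← coeff_zero_eq_aeval_zero']
    simp only [g, coeff_X_pow, coeff_X_zero, sub_zero, _root_.map_eq_zero, ite_eq_right_iff,
      one_ne_zero, coeff_sub]
    intro h0
    exact absurd (eq_zero_of_pow_eq_zero h0.symm) (by omega)
  · simp [g]
  · simp only [g, aeval_X_pow, aeval_X, map_sub, sub_eq_zero]
    intro x y _ _ hx hy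
    rw [hpow (x + y), add_pow_char_pow, ← hpow x, ← hpow y, hx, hy]
  · intro x _ hx
    simp only [g, sub_eq_zero, aeval_X_pow, aeval_X, map_sub] at hx ⊢
    rw [hpow (-x), neg_pow, neg_one_pow_char_pow, ← hpow x, hx, neg_one_mul]
  · simp only [g, aeval_X_pow, aeval_X, map_sub, mul_pow, sub_eq_zero]
    intro x y _ _ hx hy
    rw [hx, hy]


theorem abstract_bound (F K2 K3 : Type) [Field F] [Fintype F] [Field K2] [Field K3]
    [Algebra F K2] [Algebra F K3] [Fintype K2] [Fintype K3]
    (hc2 : Fintype.card K2 = Fintype.card F ^ 2)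
    (hc3 : Fintype.card K3 = Fintype.card F ^ 3) :
    (Fintype.card F ^ 3 + 1) *
      (Fintype.card F ^ 9 + Fintype.card F ^ 7 + Fintype.card F ^ 5 + Fintype.card F ^ 3)
      ≤ Bq F 13 5 4 4 := by
  classical
  set q := Fintype.card F with hq
  have hq2 : 2 ≤ q := Fintype.one_lt_card
  haveI : Module.Finite F K2 := Module.finite_iff_finite.mpr inferInstance
  haveI : Module.Finite F K3 := Module.finite_iff_finite.mpr inferInstance
  have h2 : Module.finrank F K2 = 2 := by
    have hh := Module.card_eq_pow_finrank (K := F) (V := K2)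
    rw [hc2] at hh
    exact (Nat.pow_right_injective hq2 hh).symm
  have h3 : Module.finrank F K3 = 3 := by
    have hh := Module.card_eq_pow_finrank (K := F) (V := K3)
    rw [hc3] at hh
    exact (Nat.pow_right_injective hq2 hh).symm
  let b2 : Module.Basis (Fin 2) F K2 := Module.finBasisOfFinrankEq F K2 h2
  let b3 : Module.Basis (Fin 3) F K3 := Module.finBasisOfFinrankEq F K3 h3
  let j : (Fin 2 → F) →ₗ[F] K3 := (Pi.basisFun F (Fin 2)).constr F (fun i => b3 i.castSucc)
  let p3 : K3 →ₗ[F] (Fin 2 → F) :=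
    (LinearMap.funLeft F F (Fin.castSucc : Fin 2 → Fin 3)) ∘ₗ b3.equivFun.toLinearMap
  have hpj : ∀ h, p3 (j h) = h := by
    have hcomp : p3 ∘ₗ j = LinearMap.id := by
      apply (Pi.basisFun F (Fin 2)).ext
      intro i
      simp only [LinearMap.comp_apply, LinearMap.id_apply, j, Module.Basis.constr_basis]
      funext k
      simp only [p3, LinearMap.comp_apply, LinearEquiv.coe_toLinearMap, LinearMap.funLeft_apply,
        Module.Basis.equivFun_self, Pi.basisFun_apply]
      simp [Fin.castSucc_inj, Pi.single_apply, eq_comm]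
    exact fun h => LinearMap.ext_iff.1 hcomp h
  let iota : K2 →ₗ[F] K3 := j ∘ₗ b2.equivFun.toLinearMap
  have hiota : ∀ t, iota t = 0 → t = 0 := by
    intro t ht
    have h1 : b2.equivFun t = 0 := by
      have := congrArg p3 ht
      rw [map_zero] at this
      have h2' : p3 (j (b2.equivFun t)) = b2.equivFun t := hpj _
      rw [← h2']
      exact this
    exact b2.equivFun.map_eq_zero_iff.1 h1
  haveI : Finite (Projectivization K2 (Fin 4 → K2)) := Quotient.finite _
  haveI : Fintype (Projectivization K2 (Fin 4 → K2)) := Fintype.ofFinite _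
  set P := Option K3 × Projectivization K2 (Fin 4 → K2) × K3 with hP
  let f : P → Submodule F ((Fin 4 → K2) × (K3 × (Fin 2 → F))) :=
    fun π => Ucode j p3 iota π.1 π.2.1.rep π.2.2
  have hf4 : ∀ π : P, Module.finrank F ↥(f π) = 4 :=
    fun π => finrank_Ucode j p3 iota hpj π.2.1.rep_nonzero π.2.2 h2
  have hinter : ∀ π π' : P, π ≠ π' → Module.finrank F ↥(f π ⊓ f π') ≤ 2 := by
    intro π π' hne
    refine inter_le_two j p3 iota hpj hiota h2 ?_
    intro hcon
    exact hne (by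
      obtain ⟨c, m, a⟩ := π
      obtain ⟨c', m', a'⟩ := π'
      exact hcon)
  have hfinj : Function.Injective f := by
    intro π π' hff
    by_contra hne
    have h1 := hinter π π' hne
    rw [hff, inf_idem, hf4 π'] at h1
    omega
  have hVrank : Module.finrank F ((Fin 4 → K2) × (K3 × (Fin 2 → F))) = 13 := by
    have hcV : Fintype.card ((Fin 4 → K2) × (K3 × (Fin 2 → F))) = q ^ 13 := by
      rw [Fintype.card_prod, Fintype.card_prod, Fintype.card_fun, Fintype.card_fun, hc2, hc3,
        Fintype.card_fin, Fintype.card_fin]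
      ring
    have hh := Module.card_eq_pow_finrank (K := F) (V := (Fin 4 → K2) × (K3 × (Fin 2 → F)))
    rw [hcV] at hh
    exact (Nat.pow_right_injective hq2 hh).symm
  let E : ((Fin 4 → K2) × (K3 × (Fin 2 → F))) ≃ₗ[F] (Fin 13 → F) :=
    LinearEquiv.ofFinrankEq _ _ (by rw [hVrank, Module.finrank_fin_fun])
  have hmap_inj : Function.Injective (Submodule.map E.toLinearMap) :=
    Submodule.map_injective_of_injective E.injective
  let g : P → Submodule F (Fin 13 → F) := fun π => Submodule.map E.toLinearMap (f π)
  have hginj : Function.Injective g := fun π π' h => hfinj (hmap_inj h)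
  let C : Finset (Submodule F (Fin 13 → F)) := Finset.image g Finset.univ
  have hCcard : C.card = Fintype.card P := by
    rw [Finset.card_image_of_injective _ hginj, Finset.card_univ]
  let W' : Submodule F (Fin 13 → F) :=
    Submodule.map E.toLinearMap (Wspace (F := F) (K2 := K2) (K3 := K3))
  have hrank_map : ∀ S : Submodule F ((Fin 4 → K2) × (K3 × (Fin 2 → F))),
      Module.finrank F ↥(Submodule.map E.toLinearMap S) = Module.finrank F ↥S :=
    fun S => LinearEquiv.finrank_map_eq E S
  have hW5 : Module.finrank F ↥W' = 5 := by
    rw [hrank_map]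
    exact finrank_Wspace (F := F) (K2 := K2) (K3 := K3) h3
  have hmem : Fintype.card P ∈ {n | ∃ (C : Finset (Submodule F (Fin 13 → F)))
      (W : Submodule F (Fin 13 → F)),
      C.card = n ∧ IsCDCode F 13 4 4 C ∧ Module.finrank F ↥W = 5 ∧
      (∀ U ∈ C, 4 / 2 ≤ Module.finrank F ↥(U ⊓ W))} := by
    refine ⟨C, W', hCcard, ⟨?_, ?_⟩, hW5, ?_⟩
    · intro U hU
      obtain ⟨π, -, rfl⟩ := Finset.mem_image.1 hU
      exact (hrank_map _).trans (hf4 π)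
    · intro U hU U' hU' hne
      obtain ⟨π, -, rfl⟩ := Finset.mem_image.1 hU
      obtain ⟨π', -, rfl⟩ := Finset.mem_image.1 hU'
      have hππ : π ≠ π' := fun h => hne (by rw [h])
      have hinf : g π ⊓ g π' = Submodule.map E.toLinearMap (f π ⊓ f π') :=
        (Submodule.map_inf E.toLinearMap E.injective).symm
      have hd2 : Module.finrank F ↥(g π ⊓ g π') ≤ 2 := by
        rw [hinf, hrank_map]
        exact hinter π π' hππ
      have hsum := Submodule.finrank_sup_add_finrank_inf_eq (g π) (g π')
      have hgπ : Module.finrank F ↥(g π) = 4 := (hrank_map _).trans (hf4 π)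
      have hgπ' : Module.finrank F ↥(g π') = 4 := (hrank_map _).trans (hf4 π')
      rw [hgπ, hgπ'] at hsum
      rw [subspaceDist]
      omega
    · intro U hU
      obtain ⟨π, -, rfl⟩ := Finset.mem_image.1 hU
      have hinf : g π ⊓ W' = Submodule.map E.toLinearMap (f π ⊓ Wspace) :=
        (Submodule.map_inf E.toLinearMap E.injective).symm
      rw [hinf, hrank_map]
      exact two_le_finrank_inter_W j p3 iota hpj π.1 π.2.1.rep π.2.2
  have hbdd : BddAbove {n | ∃ (C : Finset (Submodule F (Fin 13 → F)))
      (W : Submodule F (Fin 13 → F)),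
      C.card = n ∧ IsCDCode F 13 4 4 C ∧ Module.finrank F ↥W = 5 ∧
      (∀ U ∈ C, 4 / 2 ≤ Module.finrank F ↥(U ⊓ W))} := by
    haveI : Finite (Submodule F (Fin 13 → F)) :=
      Finite.of_injective (fun S => (S : Set (Fin 13 → F))) SetLike.coe_injective
    haveI : Fintype (Submodule F (Fin 13 → F)) := Fintype.ofFinite _
    refine ⟨Fintype.card (Submodule F (Fin 13 → F)), ?_⟩
    rintro n ⟨C', W'', hcard, -⟩
    rw [← hcard]
    exact (Finset.card_le_univ C').trans_eq Finset.card_univ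
  have hle : Fintype.card P ≤ Bq F 13 5 4 4 := le_csSup hbdd hmem
  have hcP : Fintype.card P = (q ^ 3 + 1) * ((q ^ 6 + q ^ 4 + q ^ 2 + 1) * q ^ 3) := by
    show Fintype.card (Option K3 × Projectivization K2 (Fin 4 → K2) × K3) = _
    rw [Fintype.card_prod, Fintype.card_prod, Fintype.card_option, hc3,
      card_projectivization (F := F) (K2 := K2) hc2]
  calc (q ^ 3 + 1) * (q ^ 9 + q ^ 7 + q ^ 5 + q ^ 3)
      = Fintype.card P := by rw [hcP]; ring
    _ ≤ Bq F 13 5 4 4 := hle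

/-- `B_q(13,5,4;4) ≥ (q^3+1)(q^9+q^7+q^5+q^3)`. -/
theorem stmt_9 (q : ℕ) (F : Type) [Field F] [Fintype F] (hq : Fintype.card F = q) :
    (q ^ 3 + 1) * (q ^ 9 + q ^ 7 + q ^ 5 + q ^ 3) ≤ Bq F 13 5 4 4 := by
  obtain ⟨K2, _, _, _, hc2⟩ := my_exists_ext F 2 (by norm_num)
  obtain ⟨K3, _, _, _, hc3⟩ := my_exists_ext F 3 (by norm_num)
  have := abstract_bound F K2 K3 hc2 hc3
  rwa [hq] at this
end

section
/- Let q be a prime power and let v, k, d, m be integers with d even, 2 ≤ d ≤ 2k, and k ≤ m ≤ v − k. Then A_q(v,d;k) ≥ A_q(m,d;k) · q^{(v−m)(k−d/2+1)} + A_q(v−m+k−d/2, d; k) (the improved linkage construction). -/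
open Polynomial Module

variable (F : Type) [Field F] [Fintype F] (n : ℕ)

/-- A degree `n` extension of the finite field `F`. -/
noncomputable def ExtK : Type := SplittingField (X ^ (Fintype.card F ^ n) - X : F[X])

noncomputable instance : Field (ExtK F n) := inferInstanceAs (Field (SplittingField _))
noncomputable instance : Algebra F (ExtK F n) := inferInstanceAs (Algebra F (SplittingField _))
instance : FiniteDimensional F (ExtK F n) :=
  inferInstanceAs (FiniteDimensional F (SplittingField (X ^ (Fintype.card F ^ n) - X : F[X])))
instance : Finite (ExtK F n) := Module.finite_of_finite F

theorem finrank_ExtK (hn : n ≠ 0) : finrank F (ExtK F n) = n := by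
  classical
  haveI : Fintype (ExtK F n) := Fintype.ofFinite _
  set q := Fintype.card F with hq
  have hq2 : 1 < q := Fintype.one_lt_card
  set gpoly := (X ^ q ^ n - X : F[X]) with hgp
  have aux : gpoly ≠ 0 := FiniteField.X_pow_card_pow_sub_X_ne_zero _ hn hq2
  -- characteristic
  set p := ringChar F with hp
  have hp_prime : p.Prime := CharP.char_is_prime F p
  haveI : Fact p.Prime := ⟨hp_prime⟩
  obtain ⟨e, -, hqe⟩ := FiniteField.card F p
  haveI : CharP (ExtK F n) p := (Algebra.charP_iff F (ExtK F n) p).mp (by infer_instance)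
  have hsep : gpoly.Separable := by
    apply galois_poly_separable p (q ^ n)
    rw [hq, hqe]
    exact dvd_pow (dvd_pow_self p e.2.ne') (by positivity)
  have key : Fintype.card (gpoly.rootSet (ExtK F n)) = gpoly.natDegree :=
    card_rootSet_eq_natDegree hsep (SplittingField.splits gpoly)
  have nd : gpoly.natDegree = q ^ n := FiniteField.X_pow_card_pow_sub_X_natDegree_eq _ hn hq2
  -- every element is fixed by x ↦ x ^ q ^ n
  have hfix : ∀ x : ExtK F n, x ^ q ^ n = x := by
    have hqn : q ^ n = p ^ (e * n) := by rw [hq, hqe, ← pow_mul]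
    set φ := iterateFrobenius (ExtK F n) p (e * n) with hφ
    have hsub : Set.range (algebraMap F (ExtK F n)) ∪ gpoly.rootSet (ExtK F n) ⊆
        (RingHom.eqLocus φ (RingHom.id _) : Set (ExtK F n)) := by
      rintro x (⟨r, rfl⟩ | hx)
      · show φ _ = _
        rw [hφ, iterateFrobenius_def, ← map_pow, ← hqn, FiniteField.pow_card_pow]
        rfl
      · show φ x = x
        rw [mem_rootSet_of_ne aux] at hx
        rw [hφ, iterateFrobenius_def, ← hqn]
        have : x ^ q ^ n - x = 0 := by
          simpa [gpoly, map_pow] using hx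
        linear_combination this
    intro x
    have hx : x ∈ Algebra.adjoin F (gpoly.rootSet (ExtK F n)) := by
      have h3 : Algebra.adjoin F (gpoly.rootSet (ExtK F n)) = ⊤ :=
        SplittingField.adjoin_rootSet gpoly
      rw [h3]; trivial
    rw [Algebra.mem_adjoin_iff] at hx
    have := (Subring.closure_le (t := RingHom.eqLocus φ (RingHom.id _))).mpr hsub hx
    have h2 : φ x = x := this
    rwa [hφ, iterateFrobenius_def, ← hqn] at h2
  have huniv : gpoly.rootSet (ExtK F n) = Set.univ := by
    rw [Set.eq_univ_iff_forall]
    intro x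
    rw [mem_rootSet_of_ne aux]
    simp [gpoly, map_pow, hfix x]
  rw [nd] at key
  simp_rw [huniv, ← Fintype.ofEquiv_card (Equiv.Set.univ _)] at key
  rw [@card_eq_pow_finrank F _ _ _ _ _ (_)] at key
  rw [← hq] at key
  exact Nat.pow_right_injective hq2 key
open Polynomial Module LinearMap

variable {F : Type} [Field F] [Fintype F] {K : Type} [Field K] [Fintype K] [Algebra F K]

/-- The `F`-linear map `x ↦ x ^ q ^ i` on `K`. -/
noncomputable def frobPow (F : Type) [Field F] [Fintype F] (K : Type) [Field K] [Fintype K]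
    [Algebra F K] (i : ℕ) : K →ₗ[F] K where
  toFun x := x ^ Fintype.card F ^ i
  map_add' x y := by
    set p := ringChar F with hp
    have hp_prime : p.Prime := CharP.char_is_prime F p
    haveI : Fact p.Prime := ⟨hp_prime⟩
    obtain ⟨e, -, hqe⟩ := FiniteField.card F p
    haveI : CharP K p := (Algebra.charP_iff F K p).mp (by infer_instance)
    have h : Fintype.card F ^ i = p ^ (e * i) := by rw [hqe, ← pow_mul]
    rw [h]
    exact add_pow_char_pow (p := p) (n := e * i) (x := x) (y := y)
  map_smul' c x := by
    simp only [RingHom.id_apply, Algebra.smul_def, mul_pow, ← map_pow,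
      FiniteField.pow_card_pow]

/-- The linearized ("q-") polynomial map `x ↦ ∑ i, a i * x ^ q ^ i` as an `F`-linear map. -/
noncomputable def qPolyMap (t : ℕ) (a : Fin t → K) : K →ₗ[F] K :=
  ∑ i : Fin t, a i • frobPow F K (i : ℕ)

lemma qPolyMap_apply (t : ℕ) (a : Fin t → K) (x : K) :
    (qPolyMap t a : K →ₗ[F] K) x = ∑ i : Fin t, a i * x ^ Fintype.card F ^ (i : ℕ) := by
  simp [qPolyMap, frobPow, LinearMap.sum_apply, smul_eq_mul]

lemma qPolyMap_sub (t : ℕ) (a b : Fin t → K) :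
    (qPolyMap t (a - b) : K →ₗ[F] K) = qPolyMap t a - qPolyMap t b := by
  simp [qPolyMap, sub_smul, Finset.sum_sub_distrib]
  ext x
  simp [LinearMap.sum_apply, LinearMap.sub_apply, sub_mul, Finset.sum_sub_distrib]

lemma finrank_ker_qPolyMap_le (t : ℕ) (ht : 1 ≤ t) (a : Fin t → K) (ha : a ≠ 0) :
    finrank F ↥(LinearMap.ker (qPolyMap t a : K →ₗ[F] K)) ≤ t - 1 := by
  classical
  set q := Fintype.card F with hq
  have hq2 : 1 < q := Fintype.one_lt_card
  set P : K[X] := ∑ i : Fin t, Polynomial.monomial (q ^ (i : ℕ)) (a i) with hP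
  obtain ⟨j, hj⟩ : ∃ j, a j ≠ 0 := by
    by_contra h
    push_neg at h
    exact ha (funext h)
  have hPne : P ≠ 0 := by
    intro h
    have : P.coeff (q ^ (j : ℕ)) = a j := by
      rw [hP, finset_sum_coeff]
      rw [Finset.sum_eq_single j]
      · simp
      · intro i _ hij
        rw [coeff_monomial, if_neg]
        intro hEq
        exact hij (Fin.ext (Nat.pow_right_injective hq2 hEq))
      · simp
    rw [h] at this
    simp at this
    exact hj this.symm
  have hdeg : P.natDegree ≤ q ^ (t - 1) := by
    apply (natDegree_sum_le _ _).trans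
    rw [Finset.fold_max_le]
    constructor
    · positivity
    · intro i _
      exact (natDegree_monomial_le _).trans
        (Nat.pow_le_pow_right (by omega) (by omega))
  have heval : ∀ x : K, P.eval x = (qPolyMap t a : K →ₗ[F] K) x := by
    intro x
    rw [hP, eval_finset_sum, qPolyMap_apply]
    simp [eval_monomial]
    rfl
  -- the kernel is contained in the roots of P
  have hsub : ((LinearMap.ker (qPolyMap t a : K →ₗ[F] K) : Set K)).toFinset ⊆ P.roots.toFinset := by
    intro x hx
    rw [Set.mem_toFinset, SetLike.mem_coe, LinearMap.mem_ker] at hx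
    rw [Multiset.mem_toFinset, mem_roots']
    exact ⟨hPne, by rw [IsRoot, heval, hx]⟩
  have hcard : Fintype.card ↥(LinearMap.ker (qPolyMap t a : K →ₗ[F] K)) ≤ q ^ (t - 1) := by
    calc Fintype.card ↥(LinearMap.ker (qPolyMap t a : K →ₗ[F] K))
        = ((LinearMap.ker (qPolyMap t a : K →ₗ[F] K) : Set K)).toFinset.card := by
          rw [Set.toFinset_card]; rfl
      _ ≤ P.roots.toFinset.card := Finset.card_le_card hsub
      _ ≤ Multiset.card P.roots := Multiset.toFinset_card_le _
      _ ≤ P.natDegree := card_roots' P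
      _ ≤ q ^ (t - 1) := hdeg
  have := card_eq_pow_finrank (K := F) (V := ↥(LinearMap.ker (qPolyMap t a : K →ₗ[F] K)))
  rw [this, ← hq] at hcard
  exact (Nat.pow_le_pow_iff_right hq2).mp hcard
lemma exists_mrd (F : Type) [Field F] [Fintype F] (n k δ : ℕ) (hδ : 1 ≤ δ) (hδk : δ ≤ k)
    (hkn : k ≤ n) :
    ∃ D : Finset ((Fin k → F) →ₗ[F] (Fin n → F)),
      D.card = Fintype.card F ^ (n * (k - δ + 1)) ∧
      ∀ f ∈ D, ∀ g ∈ D, f ≠ g → finrank F ↥(LinearMap.ker (f - g)) ≤ k - δ := by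
  classical
  have hn : n ≠ 0 := by omega
  set K := ExtK F n with hK
  haveI : Fintype K := Fintype.ofFinite _
  have hrk : finrank F K = n := finrank_ExtK F n hn
  set t := k - δ + 1 with ht
  have ht1 : 1 ≤ t := by omega
  have htk : t - 1 = k - δ := by omega
  have htk' : t ≤ k := by omega
  -- basis of K indexed by Fin n
  let b : Basis (Fin n) F K := (Module.finBasis F K).reindex (finCongr hrk)
  let eK : K ≃ₗ[F] (Fin n → F) := b.equivFun
  -- the injection of F^k into K
  let ι : (Fin k → F) →ₗ[F] K :=
    { toFun := fun x => ∑ i : Fin k, x i • b (Fin.castLE hkn i)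
      map_add' := by
        intro x y
        simp [add_smul, Finset.sum_add_distrib]
      map_smul' := by
        intro c x
        simp [smul_smul, Finset.smul_sum] }
  have hbli : LinearIndependent F (fun i : Fin k => b (Fin.castLE hkn i)) :=
    b.linearIndependent.comp _ (Fin.castLE_injective hkn)
  have hι : Function.Injective ι := by
    rw [injective_iff_map_eq_zero]
    intro x hx
    funext i
    exact Fintype.linearIndependent_iff.mp hbli x hx i
  -- the MRD code
  let M : (Fin t → K) → ((Fin k → F) →ₗ[F] (Fin n → F)) :=
    fun a => eK.toLinearMap ∘ₗ (qPolyMap t a : K →ₗ[F] K) ∘ₗ ι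
  have hrange : ∀ a : Fin t → K, a ≠ 0 →
      finrank F ↥(LinearMap.ker (M a)) ≤ k - δ := by
    intro a ha
    have h1 : LinearMap.ker (M a) =
        LinearMap.ker ((qPolyMap t a : K →ₗ[F] K) ∘ₗ ι) := by
      rw [show M a = eK.toLinearMap ∘ₗ ((qPolyMap t a : K →ₗ[F] K) ∘ₗ ι) from rfl,
        LinearMap.ker_comp, LinearEquiv.ker, Submodule.comap_bot]
    rw [h1, LinearMap.ker_comp]
    have h2 : finrank F ↥(Submodule.comap ι (LinearMap.ker (qPolyMap t a : K →ₗ[F] K)))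
        = finrank F ↥(Submodule.map ι (Submodule.comap ι
            (LinearMap.ker (qPolyMap t a : K →ₗ[F] K)))) :=
      ((Submodule.comap ι _).equivMapOfInjective ι hι).finrank_eq
    rw [h2]
    refine le_trans (Submodule.finrank_mono (Submodule.map_comap_le _ _)) ?_
    rw [← htk]
    exact finrank_ker_qPolyMap_le t ht1 a ha
  have hMinj : Function.Injective M := by
    intro a c hac
    by_contra hne
    have hd : a - c ≠ 0 := sub_ne_zero.mpr hne
    have hker : LinearMap.range ι ≤ LinearMap.ker (qPolyMap t (a - c) : K →ₗ[F] K) := by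
      rintro _ ⟨x, rfl⟩
      rw [LinearMap.mem_ker, qPolyMap_sub]
      have := congrArg (fun f => f x) hac
      simp only [M, LinearMap.comp_apply] at this
      have h3 : (qPolyMap t a : K →ₗ[F] K) (ι x) = (qPolyMap t c : K →ₗ[F] K) (ι x) :=
        eK.injective this
      simp [LinearMap.sub_apply, h3]
    have h4 : finrank F ↥(LinearMap.range ι) = k := by
      rw [LinearMap.finrank_range_of_inj hι, Module.finrank_pi]
      simp
    have h5 : finrank F ↥(LinearMap.ker (qPolyMap t (a - c) : K →ₗ[F] K)) ≤ t - 1 :=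
      finrank_ker_qPolyMap_le t ht1 _ hd
    have h6 := Submodule.finrank_mono hker
    omega
  refine ⟨Finset.univ.image M, ?_, ?_⟩
  · rw [Finset.card_image_of_injective _ hMinj, Finset.card_univ, Fintype.card_fun,
      card_eq_pow_finrank (K := F) (V := K), hrk, Fintype.card_fin, ← pow_mul]
  · intro f hf g hg hfg
    obtain ⟨a, -, rfl⟩ := Finset.mem_image.mp hf
    obtain ⟨c, -, rfl⟩ := Finset.mem_image.mp hg
    have hac : a - c ≠ 0 := sub_ne_zero.mpr (fun h => hfg (by rw [h]))
    have h7 : M a - M c = M (a - c) := by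
      simp only [M, qPolyMap_sub]
      ext x
      simp [LinearMap.sub_apply]
    rw [h7]
    exact hrange _ hac
section Support

variable {F : Type} [Field F]

/-- Splitting `F^(a+b)` as a product. -/
noncomputable def splitEquiv (F : Type) [Field F] (a b : ℕ) :
    (Fin (a + b) → F) ≃ₗ[F] (Fin a → F) × (Fin b → F) :=
  (LinearEquiv.funCongrLeft F F (finSumFinEquiv : Fin a ⊕ Fin b ≃ Fin (a + b))).trans
    (LinearEquiv.sumArrowLequivProdArrow _ _ F F)

/-- Zero-padding injection `F^c → F^m`. -/
noncomputable def padMap (F : Type) [Field F] (c m : ℕ) :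
    (Fin c → F) →ₗ[F] (Fin m → F) where
  toFun x := fun j => if h : (j : ℕ) < c then x ⟨j, h⟩ else 0
  map_add' x y := by
    funext j
    by_cases h : (j : ℕ) < c <;> simp [h]
  map_smul' r x := by
    funext j
    by_cases h : (j : ℕ) < c <;> simp [h]

lemma padMap_injective (c m : ℕ) (hcm : c ≤ m) : Function.Injective (padMap F c m) := by
  intro x y hxy
  funext i
  have := congrFun hxy ⟨(i : ℕ), lt_of_lt_of_le i.2 hcm⟩
  simpa [padMap, i.2] using this

/-- For a subspace of dimension `k`, a choice of parametrization by `F^k`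
(extended arbitrarily by `0` elsewhere). -/
noncomputable def embOf {m : ℕ} (k : ℕ) (U : Submodule F (Fin m → F)) :
    (Fin k → F) →ₗ[F] (Fin m → F) :=
  if h : Module.finrank F ↥U = k then
    U.subtype ∘ₗ (Classical.choice
      (FiniteDimensional.nonempty_linearEquiv_of_finrank_eq
        (by simp [h] : Module.finrank F (Fin k → F) = Module.finrank F ↥U) :
        Nonempty ((Fin k → F) ≃ₗ[F] ↥U))).toLinearMap
  else 0

lemma embOf_injective {m k : ℕ} (U : Submodule F (Fin m → F))
    (hU : Module.finrank F ↥U = k) : Function.Injective (embOf k U) := by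
  rw [embOf, dif_pos hU]
  exact U.injective_subtype.comp (LinearEquiv.injective _)

lemma range_embOf {m k : ℕ} (U : Submodule F (Fin m → F))
    (hU : Module.finrank F ↥U = k) : LinearMap.range (embOf k U) = U := by
  rw [embOf, dif_pos hU, LinearMap.range_comp, LinearEquiv.range, Submodule.map_subtype_top]

/-- Key dimension estimate via the first-coordinate projection. -/
lemma finrank_le_of_fst {m n : ℕ} (P : Submodule F ((Fin m → F) × (Fin n → F)))
    (T : Submodule F (Fin m → F))
    (hinj : ∀ p ∈ P, p.1 = 0 → p = 0) (hsub : ∀ p ∈ P, p.1 ∈ T) :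
    Module.finrank F ↥P ≤ Module.finrank F ↥T := by
  let g : ↥P →ₗ[F] (Fin m → F) := (LinearMap.fst F _ _) ∘ₗ P.subtype
  have hg : Function.Injective g := by
    rw [injective_iff_map_eq_zero]
    intro x hx
    have : (x : (Fin m → F) × (Fin n → F)) = 0 := hinj _ x.2 hx
    exact Subtype.ext this
  have hr : LinearMap.range g ≤ T := by
    rintro _ ⟨p, rfl⟩
    exact hsub _ p.2
  rw [← LinearMap.finrank_range_of_inj hg]
  exact Submodule.finrank_mono hr

lemma dist_formula {V : Type} [AddCommGroup V] [Module F V] [FiniteDimensional F V]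
    (X Y : Submodule F V) :
    subspaceDist X Y + 2 * Module.finrank F ↥(X ⊓ Y)
      = Module.finrank F ↥X + Module.finrank F ↥Y := by
  have h := Submodule.finrank_sup_add_finrank_inf_eq X Y
  have h2 : Module.finrank F ↥(X ⊓ Y) ≤ Module.finrank F ↥(X ⊔ Y) :=
    Submodule.finrank_mono (le_trans inf_le_left le_sup_left)
  rw [subspaceDist]
  omega

lemma dist_map_equiv {V V' : Type} [AddCommGroup V] [Module F V] [AddCommGroup V']
    [Module F V'] (E : V ≃ₗ[F] V') (X Y : Submodule F V) :
    subspaceDist (Submodule.map E.toLinearMap X) (Submodule.map E.toLinearMap Y) = subspaceDist X Y := by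
  rw [subspaceDist, subspaceDist, ← Submodule.map_sup,
    ← Submodule.map_inf E.toLinearMap E.injective,
    ← ((X ⊔ Y).equivMapOfInjective E.toLinearMap E.injective).finrank_eq,
    ← ((X ⊓ Y).equivMapOfInjective E.toLinearMap E.injective).finrank_eq]

lemma finrank_map_equiv {V V' : Type} [AddCommGroup V] [Module F V] [AddCommGroup V']
    [Module F V'] (E : V ≃ₗ[F] V') (X : Submodule F V) :
    Module.finrank F ↥(Submodule.map E.toLinearMap X) = Module.finrank F ↥X :=
  (X.equivMapOfInjective E.toLinearMap E.injective).finrank_eq.symm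

variable [Fintype F]

lemma aq_set_nonempty (v d k : ℕ) :
    ∃ C : Finset (Submodule F (Fin v → F)), C.card = 0 ∧ IsCDCode F v k d C :=
  ⟨∅, rfl, by simp [IsCDCode]⟩

lemma aq_bddAbove (v d k : ℕ) :
    BddAbove {n | ∃ C : Finset (Submodule F (Fin v → F)), C.card = n ∧ IsCDCode F v k d C} := by
  have : Finite (Submodule F (Fin v → F)) :=
    Finite.of_injective _ (SetLike.coe_injective (A := Submodule F (Fin v → F)))
  haveI : Fintype (Submodule F (Fin v → F)) := Fintype.ofFinite _
  refine ⟨Fintype.card (Submodule F (Fin v → F)), ?_⟩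
  rintro n ⟨C, rfl, -⟩
  exact Finset.card_le_univ C

lemma exists_max_code (v d k : ℕ) :
    ∃ C : Finset (Submodule F (Fin v → F)), C.card = Aq F v d k ∧ IsCDCode F v k d C := by
  have h := Nat.sSup_mem (s := {n | ∃ C : Finset (Submodule F (Fin v → F)),
      C.card = n ∧ IsCDCode F v k d C}) ⟨0, aq_set_nonempty v d k⟩ (aq_bddAbove v d k)
  exact h

lemma le_Aq {v d k N : ℕ} (C : Finset (Submodule F (Fin v → F))) (hcard : C.card = N)
    (hC : IsCDCode F v k d C) : N ≤ Aq F v d k :=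
  le_csSup (aq_bddAbove v d k) ⟨C, hcard, hC⟩

end Support

/-- the improved linkage construction:
`A_q(v,d;k) ≥ A_q(m,d;k) * q^{(v-m)(k-d/2+1)} + A_q(v-m+k-d/2, d; k)`. -/
theorem stmt_13 (q : ℕ) (F : Type) [Field F] [Fintype F] (hq : Fintype.card F = q)
    (v k d m : ℕ) (hdeven : 2 ∣ d) (hd2 : 2 ≤ d) (hdk : d ≤ 2 * k)
    (hkm : k ≤ m) (hmv : m + k ≤ v) :
    Aq F m d k * q ^ ((v - m) * (k - d / 2 + 1)) + Aq F (v - m + k - d / 2) d k ≤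
      Aq F v d k := by
  classical
  subst hq
  set n := v - m with hn
  set δ := d / 2 with hδ
  have hd : d = 2 * δ := by omega
  have hδ1 : 1 ≤ δ := by omega
  have hδk : δ ≤ k := by omega
  have hk1 : 1 ≤ k := by omega
  have hkn : k ≤ n := by omega
  set c := k - δ with hc
  set v' := v - m + k - δ with hv'
  have hv'e : c + n = v' := by omega
  have hmn : m + n = v := by omega
  have hcm : c ≤ m := by omega
  -- optimal codes and the MRD code
  obtain ⟨C1, hC1card, hC1code⟩ := exists_max_code (F := F) m d k
  obtain ⟨C2, hC2card, hC2code⟩ := exists_max_code (F := F) v' d k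
  obtain ⟨D, hDcard, hDdist⟩ := exists_mrd F n k δ hδ1 hδk hkn
  have hC1rank := hC1code.1
  have hC1dist := hC1code.2
  have hC2rank := hC2code.1
  have hC2dist := hC2code.2
  -- ambient identification
  let E : ((Fin m → F) × (Fin n → F)) ≃ₗ[F] (Fin v → F) :=
    ((LinearEquiv.funCongrLeft F F (finCongr hmn)).trans (splitEquiv F m n)).symm
  -- embedding of the second-layer ambient space
  let J : (Fin v' → F) →ₗ[F] (Fin m → F) × (Fin n → F) :=
    (LinearMap.prodMap (padMap F c m) LinearMap.id) ∘ₗ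
      ((LinearEquiv.funCongrLeft F F (finCongr hv'e)).trans (splitEquiv F c n)).toLinearMap
  have hJ : Function.Injective J := by
    have h1 : Function.Injective
        (LinearMap.prodMap (padMap F c m) (LinearMap.id (R := F) (M := Fin n → F))) := by
      intro x y h
      have ha := congrArg Prod.fst h
      have hb := congrArg Prod.snd h
      simp only [LinearMap.prodMap_apply, LinearMap.id_apply] at ha hb
      exact Prod.ext (padMap_injective c m hcm ha) hb
    exact h1.comp (LinearEquiv.injective _)
  have hJfst : ∀ w : Fin v' → F, (J w).1 ∈ LinearMap.range (padMap F c m) := by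
    intro w
    exact ⟨_, rfl⟩
  have hJrank : ∀ S : Submodule F (Fin v' → F),
      Module.finrank F ↥(Submodule.map J S) = Module.finrank F ↥S :=
    fun S => ((S.equivMapOfInjective J hJ).finrank_eq).symm
  -- the codewords
  let XU : Submodule F (Fin m → F) × ((Fin k → F) →ₗ[F] (Fin n → F)) →
      Submodule F ((Fin m → F) × (Fin n → F)) :=
    fun Uf => LinearMap.range (LinearMap.prod (embOf k Uf.1) Uf.2)
  let YW : Submodule F (Fin v' → F) → Submodule F ((Fin m → F) × (Fin n → F)) :=
    fun S => Submodule.map J S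
  have hXmem : ∀ U (f : (Fin k → F) →ₗ[F] (Fin n → F)) p,
      p ∈ XU (U, f) ↔ ∃ x, (embOf k U x, f x) = p := by
    intro U f p
    constructor
    · rintro ⟨x, rfl⟩
      exact ⟨x, rfl⟩
    · rintro ⟨x, rfl⟩
      exact ⟨x, rfl⟩
  have hprodinj : ∀ U : Submodule F (Fin m → F), Module.finrank F ↥U = k →
      ∀ f : (Fin k → F) →ₗ[F] (Fin n → F),
      Function.Injective (LinearMap.prod (embOf k U) f) := by
    intro U hU f x y h
    have h1 := congrArg Prod.fst h
    simp only [LinearMap.prod_apply, Pi.prod] at h1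
    exact embOf_injective U hU h1
  have hXrank : ∀ U : Submodule F (Fin m → F), Module.finrank F ↥U = k →
      ∀ f : (Fin k → F) →ₗ[F] (Fin n → F), Module.finrank F ↥(XU (U, f)) = k := by
    intro U hU f
    rw [show XU (U, f) = LinearMap.range (LinearMap.prod (embOf k U) f) from rfl,
      LinearMap.finrank_range_of_inj (hprodinj U hU f), Module.finrank_pi, Fintype.card_fin]
  have hXfst0 : ∀ U : Submodule F (Fin m → F), Module.finrank F ↥U = k →
      ∀ f : (Fin k → F) →ₗ[F] (Fin n → F), ∀ p ∈ XU (U, f), p.1 = 0 → p = 0 := by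
    intro U hU f p hp hp1
    obtain ⟨x, rfl⟩ := (hXmem U f p).mp hp
    have hx : x = 0 := by
      apply embOf_injective U hU
      simpa using hp1
    simp [hx]
  have hXfstmem : ∀ U : Submodule F (Fin m → F), Module.finrank F ↥U = k →
      ∀ f : (Fin k → F) →ₗ[F] (Fin n → F), ∀ p ∈ XU (U, f), p.1 ∈ U := by
    intro U hU f p hp
    obtain ⟨x, rfl⟩ := (hXmem U f p).mp hp
    have hx : embOf k U x ∈ LinearMap.range (embOf k U) := ⟨x, rfl⟩
    rw [range_embOf U hU] at hx
    exact hx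
  -- intersection dimension bounds
  have hXX1 : ∀ U : Submodule F (Fin m → F), Module.finrank F ↥U = k → ∀ f f' : (Fin k → F) →ₗ[F] (Fin n → F),
      Module.finrank F ↥(XU (U, f) ⊓ XU (U, f'))
        ≤ Module.finrank F ↥(LinearMap.ker (f - f')) := by
    intro U hU f f'
    refine le_trans (finrank_le_of_fst _ (Submodule.map (embOf k U) (LinearMap.ker (f - f')))
      (fun p hp hp1 => hXfst0 U hU f p ((Submodule.mem_inf.mp hp).1) hp1) ?_)
      (Submodule.finrank_map_le _ _)
    intro p hp
    obtain ⟨x, hx⟩ := (hXmem U f p).mp (Submodule.mem_inf.mp hp).1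
    obtain ⟨y, hy⟩ := (hXmem U f' p).mp (Submodule.mem_inf.mp hp).2
    have hxy : x = y := by
      apply embOf_injective U hU
      rw [← hy] at hx
      exact congrArg Prod.fst hx
    subst hxy
    have hker : x ∈ LinearMap.ker (f - f') := by
      rw [LinearMap.mem_ker, LinearMap.sub_apply, sub_eq_zero]
      rw [← hy] at hx
      exact congrArg Prod.snd hx
    rw [← hx]
    exact ⟨x, hker, rfl⟩
  have hXX2 : ∀ U U' : Submodule F (Fin m → F), Module.finrank F ↥U = k → Module.finrank F ↥U' = k →
      ∀ f f' : (Fin k → F) →ₗ[F] (Fin n → F),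
      Module.finrank F ↥(XU (U, f) ⊓ XU (U', f'))
        ≤ Module.finrank F ↥(U ⊓ U') := by
    intro U U' hU hU' f f'
    refine finrank_le_of_fst _ (U ⊓ U')
      (fun p hp hp1 => hXfst0 U hU f p ((Submodule.mem_inf.mp hp).1) hp1) ?_
    intro p hp
    exact Submodule.mem_inf.mpr ⟨hXfstmem U hU f p (Submodule.mem_inf.mp hp).1,
      hXfstmem U' hU' f' p (Submodule.mem_inf.mp hp).2⟩
  have hXY : ∀ U : Submodule F (Fin m → F), Module.finrank F ↥U = k → ∀ f : (Fin k → F) →ₗ[F] (Fin n → F),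
      ∀ S : Submodule F (Fin v' → F),
      Module.finrank F ↥(XU (U, f) ⊓ YW S) ≤ c := by
    intro U hU f S
    refine le_trans (finrank_le_of_fst _ (LinearMap.range (padMap F c m))
      (fun p hp hp1 => hXfst0 U hU f p ((Submodule.mem_inf.mp hp).1) hp1) ?_) ?_
    · intro p hp
      obtain ⟨w, -, rfl⟩ := Submodule.mem_map.mp (Submodule.mem_inf.mp hp).2
      exact hJfst w
    · refine le_trans (LinearMap.finrank_range_le _) ?_
      rw [Module.finrank_pi, Fintype.card_fin]
  have hYY : ∀ S S' : Submodule F (Fin v' → F),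
      Module.finrank F ↥(YW S ⊓ YW S') = Module.finrank F ↥(S ⊓ S') := by
    intro S S'
    rw [show YW S ⊓ YW S' = Submodule.map J (S ⊓ S') from
      (Submodule.map_inf J hJ).symm]
    exact hJrank _
  -- ranks of codewords
  have hYrank : ∀ S ∈ C2, Module.finrank F ↥(YW S) = k := by
    intro S hS
    rw [hJrank S]
    exact hC2rank S hS
  -- the code in the product space
  set CW : Finset (Submodule F ((Fin m → F) × (Fin n → F))) :=
    (C1 ×ˢ D).image XU ∪ C2.image YW with hCW
  -- X-codewords are never Y-codewords
  have hneXY : ∀ U ∈ C1, ∀ f ∈ D, ∀ S ∈ C2, XU (U, f) ≠ YW S := by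
    intro U hU f hf S hS h
    have h2 := hXY U (hC1rank U hU) f S
    rw [h, inf_idem] at h2
    rw [hYrank S hS] at h2
    omega
  -- injectivity of XU on C1 ×ˢ D
  have hXUinj : Set.InjOn XU ↑(C1 ×ˢ D) := by
    rintro ⟨U, f⟩ hUf ⟨U', f'⟩ hUf' heq
    rw [Finset.coe_product] at hUf hUf'
    obtain ⟨hU1, hf1⟩ := hUf
    obtain ⟨hU1', hf1'⟩ := hUf'
    simp only [Finset.mem_coe] at hU1 hf1 hU1' hf1'
    have hUr := hC1rank U hU1
    have hUr' := hC1rank U' hU1'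
    by_cases hUU : U = U'
    · subst hUU
      by_cases hff : f = f'
      · rw [hff]
      · exfalso
        have h2 := hXX1 U hUr f f'
        rw [heq, inf_idem, hXrank U hUr f'] at h2
        have h3 := hDdist f hf1 f' hf1' hff
        omega
    · exfalso
      have h2 := hXX2 U U' hUr hUr' f f'
      rw [heq, inf_idem, hXrank U' hUr' f'] at h2
      have h4 := hC1dist U hU1 U' hU1' hUU
      have h5 := dist_formula (F := F) U U'
      rw [hUr, hUr'] at h5
      omega
  have hYWinj : Function.Injective YW := Submodule.map_injective_of_injective hJ
  -- cardinality of CW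
  have hdisj : Disjoint ((C1 ×ˢ D).image XU) (C2.image YW) := by
    rw [Finset.disjoint_left]
    rintro a ha hb
    obtain ⟨⟨U, f⟩, hUf, rfl⟩ := Finset.mem_image.mp ha
    obtain ⟨S, hS, hSe⟩ := Finset.mem_image.mp hb
    obtain ⟨hU1, hf1⟩ := Finset.mem_product.mp hUf
    exact hneXY U hU1 f hf1 S hS hSe.symm
  have hCWcard : CW.card = Aq F m d k * Fintype.card F ^ (n * (k - δ + 1))
      + Aq F v' d k := by
    rw [hCW, Finset.card_union_of_disjoint hdisj,
      Finset.card_image_of_injOn hXUinj,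
      Finset.card_image_of_injective _ hYWinj,
      Finset.card_product, hC1card, hC2card, hDcard]
  -- CW is a code
  have hCWrank : ∀ P ∈ CW, Module.finrank F ↥P = k := by
    intro P hP
    rw [hCW, Finset.mem_union] at hP
    rcases hP with hP | hP
    · obtain ⟨⟨U, f⟩, hUf, rfl⟩ := Finset.mem_image.mp hP
      obtain ⟨hU1, -⟩ := Finset.mem_product.mp hUf
      exact hXrank U (hC1rank U hU1) f
    · obtain ⟨S, hS, rfl⟩ := Finset.mem_image.mp hP
      exact hYrank S hS
  have hCWdist : ∀ P ∈ CW, ∀ Q ∈ CW, P ≠ Q → d ≤ subspaceDist P Q := by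
    intro P hP Q hQ hPQ
    have hform := dist_formula (F := F) P Q
    rw [hCWrank P hP, hCWrank Q hQ] at hform
    rw [hCW, Finset.mem_union] at hP hQ
    have hbound : Module.finrank F ↥(P ⊓ Q) ≤ k - δ := by
      rcases hP with hP | hP <;> rcases hQ with hQ | hQ
      · obtain ⟨⟨U, f⟩, hUf, rfl⟩ := Finset.mem_image.mp hP
        obtain ⟨⟨U', f'⟩, hUf', rfl⟩ := Finset.mem_image.mp hQ
        obtain ⟨hU1, hf1⟩ := Finset.mem_product.mp hUf
        obtain ⟨hU1', hf1'⟩ := Finset.mem_product.mp hUf'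
        have hUr := hC1rank U hU1
        have hUr' := hC1rank U' hU1'
        by_cases hUU : U = U'
        · subst hUU
          have hff : f ≠ f' := by
            intro h
            exact hPQ (by rw [h])
          have h2 := hXX1 U hUr f f'
          have h3 := hDdist f hf1 f' hf1' hff
          omega
        · have h2 := hXX2 U U' hUr hUr' f f'
          have h4 := hC1dist U hU1 U' hU1' hUU
          have h5 := dist_formula (F := F) U U'
          rw [hUr, hUr'] at h5
          omega
      · obtain ⟨⟨U, f⟩, hUf, rfl⟩ := Finset.mem_image.mp hP
        obtain ⟨S, hS, rfl⟩ := Finset.mem_image.mp hQ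
        obtain ⟨hU1, -⟩ := Finset.mem_product.mp hUf
        exact hXY U (hC1rank U hU1) f S
      · obtain ⟨S, hS, rfl⟩ := Finset.mem_image.mp hP
        obtain ⟨⟨U, f⟩, hUf, rfl⟩ := Finset.mem_image.mp hQ
        obtain ⟨hU1, -⟩ := Finset.mem_product.mp hUf
        rw [inf_comm]
        exact hXY U (hC1rank U hU1) f S
      · obtain ⟨S, hS, rfl⟩ := Finset.mem_image.mp hP
        obtain ⟨S', hS', rfl⟩ := Finset.mem_image.mp hQ
        have hSS : S ≠ S' := by
          intro h
          exact hPQ (by rw [h])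
        have h2 := hYY S S'
        have h4 := hC2dist S hS S' hS' hSS
        have h5 := dist_formula (F := F) S S'
        rw [hC2rank S hS, hC2rank S' hS'] at h5
        omega
    omega
  -- transport to F^v
  set C : Finset (Submodule F (Fin v → F)) :=
    CW.image (fun P => Submodule.map E.toLinearMap P) with hC
  have hEinj : Function.Injective (fun P : Submodule F ((Fin m → F) × (Fin n → F)) =>
      Submodule.map E.toLinearMap P) := by
    intro P Q h
    exact (Submodule.orderIsoMapComap E).injective h
  have hCcard : C.card = Aq F m d k * Fintype.card F ^ (n * (k - δ + 1)) + Aq F v' d k := by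
    rw [hC, Finset.card_image_of_injective _ hEinj, hCWcard]
  have hCcode : IsCDCode F v k d C := by
    constructor
    · intro Z hZ
      obtain ⟨P, hP, rfl⟩ := Finset.mem_image.mp hZ
      rw [finrank_map_equiv E P]
      exact hCWrank P hP
    · intro Z hZ Z' hZ' hne
      obtain ⟨P, hP, rfl⟩ := Finset.mem_image.mp hZ
      obtain ⟨Q, hQ, rfl⟩ := Finset.mem_image.mp hZ'
      have hPQ : P ≠ Q := fun h => hne (by rw [h])
      rw [dist_map_equiv E P Q]
      exact hCWdist P hP Q hQ hPQ
  exact le_Aq C hCcard hCcode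
end
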